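/- Let k ≥ 1, n ≥ 1 and q ∈ ℚ with q ∉ {0, −1, −2, …, −(n−2)} (so that B_{j}(q) ≠ 0 for 0 ≤ j ≤ n−2). Let Sₙ(q) be the n×n Hessenberg matrix over ℚ[t₁,…,t_k] with entries (Sₙ)_{i,1} = B₀(q)·t_i = q·t_i, (Sₙ)_{i,j} = (1/i)·((i−j+1)·B_{j−1}(q)/B_{j−2}(q) − (j−1)(i−j))·t_{i−j+1} for 2 ≤ j ≤ i, (Sₙ)_{i,i+1} = −1, and all other entries 0. Then det Sₙ(q) = F^q_{k,n}. -/

import Mathlib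

open Finset MvPolynomial

/-- The set of partitions `α ⊢ n` with parts at most `k`, encoded as tuples
`α = (α₁, …, α_k) ∈ ℕ^k` (0-indexed) with `∑ j, (j+1)·α_j = n`. -/
def partitions (k n : ℕ) : Finset (Fin k → ℕ) :=
  (Fintype.piFinset fun _ : Fin k => Finset.range (n + 1)).filter
    fun α => ∑ j : Fin k, (j.1 + 1) * α j = n

/-- The variable `t_{m+1}` of `ℚ[t₁,…,t_k]` (0-indexed), with the convention
`t_j = 0` for `j > k`. -/
noncomputable def tQ (k m : ℕ) : MvPolynomial (Fin k) ℚ :=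
  if h : m < k then X ⟨m, h⟩ else 0

/-- The Stirling operator of the first kind: `B q m = q(q+1)⋯(q+m-1)`, i.e.
`B q m = B_{m-1}(q)` in the paper's notation, with `B q 0 = B_{-1}(q) = 1`. -/
def B (q : ℚ) (m : ℕ) : ℚ := ∏ i ∈ Finset.range m, (q + i)

/-- The `q`-th convolution root of the generalized Fibonacci polynomial:
`F^q_{k,n} = ∑_{α ⊢ n} (B_{|α|-1}(q) / (α₁!⋯α_k!)) · t^α`, with `F^q_{k,0} = 1`. -/
noncomputable def Fq (k : ℕ) (q : ℚ) (n : ℕ) : MvPolynomial (Fin k) ℚ :=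
  if n = 0 then 1 else
    ∑ α ∈ partitions k n,
      C (B q (∑ j, α j) / ∏ j, ((α j).factorial : ℚ)) * ∏ j, X j ^ α j

/-- The `n×n` Hessenberg–Stirling matrix `Sₙ(q)` (0-indexed): the first column is
`q·t_i`, for 1-based indices `i, j` with `2 ≤ j ≤ i` the entry is
`(1/i)·((i-j+1)·B_{j-1}(q)/B_{j-2}(q) - (j-1)(i-j))·t_{i-j+1}`
(in the paper's notation; here `B_{j-1}(q)/B_{j-2}(q) = B q j / B q (j-1)`),
the superdiagonal entries are `-1`, and all other entries are `0`. -/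
noncomputable def Smat (k n : ℕ) (q : ℚ) : Matrix (Fin n) (Fin n) (MvPolynomial (Fin k) ℚ) :=
  fun i j =>
    if j.1 = 0 then C q * tQ k i.1
    else if j.1 ≤ i.1 then
      C ((((i.1 - j.1 + 1 : ℕ) : ℚ) * (B q (j.1 + 1) / B q j.1)
            - (j.1 : ℚ) * ((i.1 - j.1 : ℕ) : ℚ)) / ((i.1 : ℚ) + 1)) * tQ k (i.1 - j.1)
    else if j.1 = i.1 + 1 then -1
    else 0

section Hess

variable {R : Type*} [CommRing R]

def hess (a : ℕ → ℕ → R) (n : ℕ) : Matrix (Fin n) (Fin n) R :=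
  fun i j => if j.1 ≤ i.1 then a i.1 j.1 else if j.1 = i.1 + 1 then -1 else 0

lemma hess_minor (a : ℕ → ℕ → R) (n : ℕ) (j : Fin (n+1)) :
    ((hess a (n+1)).submatrix Fin.castSucc j.succAbove).det
      = (-1)^(n - j.1) * (hess a j.1).det := by
  have hj : j.1 + (n - j.1) = n := by omega
  set e : Fin j.1 ⊕ Fin (n - j.1) ≃ Fin n := finSumFinEquiv.trans (finCongr hj) with he
  rw [← Matrix.det_submatrix_equiv_self e]
  have hD : ∀ (b c : Fin (n - j.1)),
      (((hess a (n+1)).submatrix Fin.castSucc j.succAbove).submatrix e e) (Sum.inr b) (Sum.inr c)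
        = (if c.1 < b.1 then a (j.1+b.1) (j.1+c.1+1) else if c = b then -1 else 0) := by
    intro b c
    have hb : (e (Sum.inr b)).1 = j.1 + b.1 := by simp [he]
    have hc : (e (Sum.inr c)).1 = j.1 + c.1 := by simp [he]
    have hcol : (j.succAbove (e (Sum.inr c))).1 = j.1 + c.1 + 1 := by
      rw [Fin.succAbove]
      rw [if_neg]
      · simp [hc]
      · simp only [Fin.lt_iff_val_lt_val, Fin.coe_castSucc, hc]; omega
    simp only [Matrix.submatrix_apply, hess, hcol, Fin.coe_castSucc, hb]
    rcases lt_trichotomy c.1 b.1 with h | h | h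
    · rw [if_pos (by omega), if_pos h]
    · rw [if_neg (by omega), if_pos (by omega), if_neg (by omega), if_pos (Fin.ext h)]
    · rw [if_neg (by omega), if_neg (by omega), if_neg (by omega), if_neg (by rintro rfl; omega)]
  have hM : (((hess a (n+1)).submatrix Fin.castSucc j.succAbove).submatrix e e)
      = Matrix.fromBlocks (hess a j.1) 0
          (Matrix.of fun b c => a (j.1+b.1) c.1)
          (Matrix.of fun b c => if c.1 < b.1 then a (j.1+b.1) (j.1+c.1+1) else if c = b then -1 else 0) := by
    ext x y
    have hvinl : ∀ (c : Fin j.1), (e (Sum.inl c)).1 = c.1 := by intro c; simp [he]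
    have hvinr : ∀ (c : Fin (n - j.1)), (e (Sum.inr c)).1 = j.1 + c.1 := by intro c; simp [he]
    have hcolinl : ∀ (c : Fin j.1), (j.succAbove (e (Sum.inl c))).1 = c.1 := by
      intro c
      rw [Fin.succAbove, if_pos]
      · simp [hvinl]
      · simp only [Fin.lt_iff_val_lt_val, Fin.coe_castSucc, hvinl]; omega
    cases x with
    | inl b => cases y with
      | inl c =>
        simp only [Matrix.submatrix_apply, Matrix.fromBlocks_apply₁₁, hess,
          Fin.coe_castSucc, hvinl, hcolinl]
      | inr c =>
        have := hD  -- not needed, direct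
        have hcol : (j.succAbove (e (Sum.inr c))).1 = j.1 + c.1 + 1 := by
          rw [Fin.succAbove, if_neg]
          · simp [hvinr]
          · simp only [Fin.lt_iff_val_lt_val, Fin.coe_castSucc, hvinr]; omega
        simp only [Matrix.submatrix_apply, Matrix.fromBlocks_apply₁₂, hess,
          Fin.coe_castSucc, hvinl, hcol, Matrix.zero_apply]
        rw [if_neg (by omega), if_neg (by omega)]
    | inr b => cases y with
      | inl c =>
        simp only [Matrix.submatrix_apply, Matrix.fromBlocks_apply₂₁, hess,
          Fin.coe_castSucc, hvinr, hcolinl, Matrix.of_apply]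
        rw [if_pos (by omega)]
      | inr c =>
        rw [hD b c]; simp [Matrix.fromBlocks_apply₂₂]
  rw [hM, Matrix.det_fromBlocks_zero₁₂]
  rw [mul_comm]
  congr 1
  rw [Matrix.det_of_lowerTriangular _ (by
    intro x y hxy
    simp only [Matrix.BlockTriangular, Matrix.of_apply] at *
    rw [if_neg (by exact Nat.not_lt.2 (le_of_lt hxy)), if_neg (by
      rintro rfl; exact lt_irrefl _ hxy)]
    )]
  simp

lemma det_hess_succ (a : ℕ → ℕ → R) (n : ℕ) :
    (hess a (n+1)).det = ∑ j : Fin (n+1), a n j.1 * (hess a j.1).det := by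
  rw [Matrix.det_succ_row _ (Fin.last n)]
  refine Finset.sum_congr rfl fun j _ => ?_
  have h1 : (Fin.last n).succAbove = Fin.castSucc := Fin.succAbove_last
  rw [h1, hess_minor]
  have h2 : hess a (n+1) (Fin.last n) j = a n j.1 := by
    simp only [hess, Fin.val_last]
    rw [if_pos (by omega)]
  rw [h2]
  have h3 : ((-1 : R))^((Fin.last n).1 + j.1) * ((-1 : R))^(n - j.1) = 1 := by
    rw [← pow_add, Fin.val_last]
    have : n + j.1 + (n - j.1) = 2 * n + 2 * j.1 - 2 * j.1 + 0 := by omega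
    rw [show n + j.1 + (n - j.1) = 2 * n by omega, pow_mul]
    norm_num
  calc (-1:R)^((Fin.last n).1 + j.1) * a n j.1 * ((-1:R)^(n - j.1) * (hess a j.1).det)
      = ((-1:R)^((Fin.last n).1 + j.1) * (-1:R)^(n - j.1)) * (a n j.1 * (hess a j.1).det) := by ring
    _ = a n j.1 * (hess a j.1).det := by rw [h3, one_mul]

end Hess

lemma mem_partitions {k n : ℕ} {α : Fin k → ℕ} :
    α ∈ partitions k n ↔ ∑ j : Fin k, (j.1 + 1) * α j = n := by
  constructor
  · intro h; exact (Finset.mem_filter.1 h).2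
  · intro h
    refine Finset.mem_filter.2 ⟨Fintype.mem_piFinset.2 fun j => ?_, h⟩
    rw [Finset.mem_range]
    have h1 : α j ≤ (j.1 + 1) * α j := Nat.le_mul_of_pos_left _ (Nat.succ_pos _)
    have h2 : (j.1 + 1) * α j ≤ n := h ▸ Finset.single_le_sum
      (f := fun j : Fin k => (j.1 + 1) * α j) (fun _ _ => Nat.zero_le _) (Finset.mem_univ j)
    omega

lemma Fq_eq_sum (k : ℕ) (q : ℚ) (n : ℕ) :
    Fq k q n = ∑ α ∈ partitions k n,
      C (B q (∑ j, α j) / ∏ j, ((α j).factorial : ℚ)) * ∏ j, X j ^ α j := by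
  rcases Nat.eq_zero_or_pos n with rfl | hn
  · have hp : partitions k 0 = {fun _ => 0} := by
      ext α
      rw [mem_partitions, Finset.mem_singleton]
      constructor
      · intro h
        funext j
        have := Finset.sum_eq_zero_iff.1 h j (Finset.mem_univ j)
        exact (Nat.mul_eq_zero.1 this).resolve_left (Nat.succ_ne_zero _)
      · rintro rfl; simp
    simp [Fq, hp, B]
  · rw [Fq, if_neg (by omega)]

noncomputable def aC (k : ℕ) (q : ℚ) (i j : ℕ) : MvPolynomial (Fin k) ℚ :=
  C ((((i+1:ℕ):ℚ) + (q-1)*((i-j+1:ℕ):ℚ))/((i+1:ℕ):ℚ)) * tQ k (i-j)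

section helpers

variable {k : ℕ} (β : Fin k → ℕ) (p : Fin k)

lemma sum_addone (g : Fin k → ℕ) :
    ∑ l, g l * (β l + if l = p then 1 else 0) = (∑ l, g l * β l) + g p := by
  simp_rw [Nat.mul_add, Finset.sum_add_distrib, mul_ite, mul_one, mul_zero]
  rw [Finset.sum_ite_eq' Finset.univ p g, if_pos (Finset.mem_univ p)]

lemma prodX_addone :
    (∏ l, (X l : MvPolynomial (Fin k) ℚ) ^ (β l + if l = p then 1 else 0))
      = X p * ∏ l, X l ^ β l := by
  simp_rw [pow_add, Finset.prod_mul_distrib, pow_ite, pow_one, pow_zero]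
  rw [Finset.prod_ite_eq' Finset.univ p (fun l => (X l : MvPolynomial (Fin k) ℚ)),
    if_pos (Finset.mem_univ p), mul_comm]

lemma fact_addone :
    (∏ l, (((β l + if l = p then 1 else 0)).factorial : ℚ))
      = ((β p : ℚ) + 1) * ∏ l, ((β l).factorial : ℚ) := by
  rw [← Finset.mul_prod_erase Finset.univ
      (fun l => (((β l + if l = p then 1 else 0)).factorial : ℚ)) (Finset.mem_univ p),
    ← Finset.mul_prod_erase Finset.univ (fun l => ((β l).factorial : ℚ)) (Finset.mem_univ p)]
  rw [Finset.prod_congr rfl (fun l hl => by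
    rw [if_neg (Finset.ne_of_mem_erase hl)])]
  rw [if_pos rfl, Nat.factorial_succ]
  push_cast
  ring

lemma fact_ne_zero : (∏ l, ((β l).factorial : ℚ)) ≠ 0 :=
  Finset.prod_ne_zero_iff.2 fun l _ => Nat.cast_ne_zero.2 (Nat.factorial_ne_zero _)

end helpers

lemma B_succ (q : ℚ) (m : ℕ) : B q (m+1) = B q m * (q + m) := Finset.prod_range_succ _ _

lemma sum_addone' {k : ℕ} (β : Fin k → ℕ) (p : Fin k) :
    ∑ l, (β l + if l = p then 1 else 0) = (∑ l, β l) + 1 := by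
  rw [Finset.sum_add_distrib]
  congr 1
  rw [Finset.sum_ite_eq' Finset.univ p (fun _ => 1), if_pos (Finset.mem_univ p)]

lemma Fq_rec (k : ℕ) (hk : 1 ≤ k) (q : ℚ) (n : ℕ) (hn : 1 ≤ n) :
    ∑ j : Fin n, aC k q (n-1) j.1 * Fq k q j.1 = Fq k q n := by
  classical
  have hn0 : (n : ℚ) ≠ 0 := Nat.cast_ne_zero.2 (by omega)
  set f : (Σ _ : ℕ, (Fin k → ℕ)) → MvPolynomial (Fin k) ℚ := fun x =>
    C (((n:ℚ) + (q-1)*((n-x.1:ℕ):ℚ))/(n:ℚ)) * tQ k (n-1-x.1) *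
      (C (B q (∑ l, x.2 l) / ∏ l, ((x.2 l).factorial : ℚ)) * ∏ l, X l ^ x.2 l) with hf
  set g : (Σ _ : Fin k → ℕ, Fin k) → MvPolynomial (Fin k) ℚ := fun y =>
    C (((n:ℚ) + (q-1)*((y.2.1:ℚ)+1))/(n:ℚ)
        * (B q ((∑ l, y.1 l) - 1) * (y.1 y.2 : ℚ) / ∏ l, ((y.1 l).factorial : ℚ)))
      * ∏ l, X l ^ y.1 l with hg
  have step1 : ∑ j : Fin n, aC k q (n-1) j.1 * Fq k q j.1
      = ∑ x ∈ ((Finset.range n).sigma fun j => partitions k j), f x := by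
    rw [Finset.sum_sigma]
    rw [← Fin.sum_univ_eq_sum_range (fun j => ∑ b ∈ partitions k j, f ⟨j, b⟩) n]
    refine Finset.sum_congr rfl fun j _ => ?_
    have hj : j.1 < n := j.2
    have e1 : n - 1 + 1 = n := by omega
    have e2 : n - 1 - j.1 + 1 = n - j.1 := by omega
    rw [aC, Fq_eq_sum, Finset.mul_sum]
    refine Finset.sum_congr rfl fun β _ => ?_
    simp only [hf]
    rw [e1, e2]
  have step2 : (∑ x ∈ ((Finset.range n).sigma fun j => partitions k j), f x)
      = ∑ x ∈ (((Finset.range n).sigma fun j => partitions k j).filter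
          fun x => n - 1 - x.1 < k), f x := by
    refine (Finset.sum_filter_of_ne fun x hx hne => ?_).symm
    by_contra hP
    apply hne
    simp only [hf]
    rw [tQ, dif_neg hP]
    ring
  set U := (partitions k n).sigma (fun α => Finset.univ.filter fun p : Fin k => 0 < α p) with hU
  set fwd : (Σ _ : ℕ, (Fin k → ℕ)) → (Σ _ : Fin k → ℕ, Fin k) := fun x =>
    ⟨fun l => x.2 l + if l.1 = n - 1 - x.1 then 1 else 0,
      if h : n - 1 - x.1 < k then ⟨n-1-x.1, h⟩ else ⟨0, hk⟩⟩ with hfwd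
  set bwd : (Σ _ : Fin k → ℕ, Fin k) → (Σ _ : ℕ, (Fin k → ℕ)) := fun y =>
    ⟨n - (y.2.1 + 1), fun l => y.1 l - if l = y.2 then 1 else 0⟩ with hbwd
  have step3 : (∑ x ∈ (((Finset.range n).sigma fun j => partitions k j).filter
          fun x => n - 1 - x.1 < k), f x) = ∑ y ∈ U, g y := by
    refine Finset.sum_nbij' fwd bwd ?_ ?_ ?_ ?_ ?_
    · rintro ⟨j, β⟩ hx
      rw [Finset.mem_filter, Finset.mem_sigma, Finset.mem_range] at hx
      obtain ⟨⟨hjn, hβ⟩, hP⟩ := hx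
      dsimp only at hjn hβ hP ⊢
      have hβs := mem_partitions.1 hβ
      simp only [hfwd, dif_pos hP]
      set p : Fin k := ⟨n-1-j, hP⟩ with hp
      have hcond : ∀ l : Fin k, (if l.1 = n - 1 - j then 1 else 0)
          = (if l = p then 1 else 0) := by
        intro l
        congr 1
        simp [hp, Fin.ext_iff]
      rw [hU, Finset.mem_sigma]
      constructor
      · rw [mem_partitions]
        simp only [hcond]
        have hterm : ∀ x : Fin k, (x.1+1) * (β x + if x = p then 1 else 0)
            = (x.1+1) * β x + (x.1+1) * (if x = p then 1 else 0) := fun x => Nat.mul_add _ _ _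
        rw [Finset.sum_congr rfl fun x _ => hterm x, Finset.sum_add_distrib]
        have h3 : (∑ l : Fin k, (l.1+1) * (if l = p then 1 else 0)) = p.1 + 1 := by
          simp_rw [mul_ite, mul_one, mul_zero]
          rw [Finset.sum_ite_eq' Finset.univ p (fun l => l.1 + 1), if_pos (Finset.mem_univ p)]
        rw [h3, hβs]
        simp only [hp]
        omega
      · simp [hp]
    · rintro ⟨α, p⟩ hy
      rw [hU, Finset.mem_sigma, Finset.mem_filter] at hy
      obtain ⟨hα, -, hαp⟩ := hy
      dsimp only at hα hαp
      have hαs := mem_partitions.1 hα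
      have hple : p.1 + 1 ≤ n := by
        calc p.1 + 1 ≤ (p.1 + 1) * α p := Nat.le_mul_of_pos_right _ hαp
        _ ≤ n := hαs ▸ Finset.single_le_sum
            (f := fun l : Fin k => (l.1 + 1) * α l) (fun _ _ => Nat.zero_le _) (Finset.mem_univ p)
      simp only [hbwd]
      rw [Finset.mem_filter, Finset.mem_sigma, Finset.mem_range]
      dsimp only
      refine ⟨⟨by omega, ?_⟩, by have := p.2; omega⟩
      rw [mem_partitions]
      have hsplit : ∀ l : Fin k, (l.1+1) * α l
          = (l.1+1) * (α l - if l = p then 1 else 0) + (l.1+1) * (if l = p then 1 else 0) := by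
        intro l
        rcases eq_or_ne l p with rfl | h
        · simp only [eq_self_iff_true, if_true, Nat.mul_one]
          rw [← Nat.mul_succ]
          congr 1
          omega
        · simp [h]
      have h2 : ∑ l : Fin k, (l.1+1) * α l
          = (∑ l : Fin k, (l.1+1) * (α l - if l = p then 1 else 0))
            + ∑ l : Fin k, (l.1+1) * (if l = p then 1 else 0) := by
        rw [← Finset.sum_add_distrib]
        exact Finset.sum_congr rfl fun l _ => hsplit l
      have h3 : (∑ l : Fin k, (l.1+1) * (if l = p then 1 else 0)) = p.1 + 1 := by
        simp_rw [mul_ite, mul_one, mul_zero]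
        rw [Finset.sum_ite_eq' Finset.univ p (fun l => l.1 + 1), if_pos (Finset.mem_univ p)]
      omega
    · rintro ⟨j, β⟩ hx
      rw [Finset.mem_filter, Finset.mem_sigma, Finset.mem_range] at hx
      obtain ⟨⟨hjn, hβ⟩, hP⟩ := hx
      dsimp only at hjn hβ hP
      simp only [hfwd, hbwd, dif_pos hP]
      refine Sigma.ext ?_ (heq_of_eq ?_)
      · dsimp only
        omega
      · dsimp only
        funext l
        rcases eq_or_ne l.1 (n - 1 - j) with h | h
        · rw [if_pos h, if_pos (by exact Fin.ext h)]
          omega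
        · rw [if_neg h, if_neg (by intro hh; exact h (congrArg Fin.val hh))]
          omega
    · rintro ⟨α, p⟩ hy
      rw [hU, Finset.mem_sigma, Finset.mem_filter] at hy
      obtain ⟨hα, -, hαp⟩ := hy
      dsimp only at hα hαp
      have hαs := mem_partitions.1 hα
      have hple : p.1 + 1 ≤ n := by
        calc p.1 + 1 ≤ (p.1 + 1) * α p := Nat.le_mul_of_pos_right _ hαp
        _ ≤ n := hαs ▸ Finset.single_le_sum
            (f := fun l : Fin k => (l.1 + 1) * α l) (fun _ _ => Nat.zero_le _) (Finset.mem_univ p)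
      have e : n - 1 - (n - (p.1 + 1)) = p.1 := by omega
      simp only [hfwd, hbwd]
      simp only [e, dif_pos p.2]
      refine Sigma.ext ?_ (heq_of_eq ?_)
      · funext l
        dsimp only
        rcases eq_or_ne l p with rfl | h
        · rw [if_pos rfl, if_pos rfl]
          omega
        · rw [if_neg h, if_neg (by intro hh; exact h (Fin.ext hh))]
          omega
      · exact rfl
    · rintro ⟨j, β⟩ hx
      rw [Finset.mem_filter, Finset.mem_sigma, Finset.mem_range] at hx
      obtain ⟨⟨hjn, hβ⟩, hP⟩ := hx
      dsimp only at hjn hβ hP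
      simp only [hf, hg, hfwd, dif_pos hP]
      simp only [eq_self_iff_true, if_true]
      set p : Fin k := ⟨n-1-j, hP⟩ with hp
      have hcond : ∀ l : Fin k, (if l.1 = n - 1 - j then 1 else 0)
          = (if l = p then 1 else 0) := by
        intro l
        congr 1
        simp [hp, Fin.ext_iff]
      simp only [hcond]
      rw [sum_addone' β p, prodX_addone β p, fact_addone β p]
      have htq : tQ k (n - 1 - j) = X p := by rw [tQ, dif_pos hP]
      have hcast : ((n - j : ℕ) : ℚ) = ((n - 1 - j : ℕ) : ℚ) + 1 := by
        have h4 : n - j = (n-1-j) + 1 := by omega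
        rw [h4]
        push_cast
        ring
      rw [htq, hcast]
      have hsub : (∑ l, β l) + 1 - 1 = ∑ l, β l := by omega
      rw [hsub]
      have hF := fact_ne_zero β
      have hscal : ((n:ℚ) + (q-1)*(((n - 1 - j : ℕ):ℚ)+1))/(n:ℚ)
            * (B q (∑ l, β l) * ((β p + 1 : ℕ) : ℚ)
              / (((β p : ℚ) + 1) * ∏ l, ((β l).factorial : ℚ)))
          = ((n:ℚ) + (q-1)*(((n - 1 - j : ℕ):ℚ)+1))/(n:ℚ)
            * (B q (∑ l, β l) / ∏ l, ((β l).factorial : ℚ)) := by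
        have hb1 : ((β p : ℚ) + 1) ≠ 0 := by positivity
        push_cast
        field_simp
      rw [hscal, map_mul]
      ring
  have step4 : (∑ y ∈ U, g y) = Fq k q n := by
    rw [hU, Finset.sum_sigma, Fq_eq_sum]
    refine Finset.sum_congr rfl fun α hα => ?_
    have hαs := mem_partitions.1 hα
    set s := ∑ l, α l with hs
    have hs1 : 1 ≤ s := by
      by_contra hcon
      have hs0 : s = 0 := by omega
      have h0 := Finset.sum_eq_zero_iff.1 (hs.symm.trans hs0)
      have hz : ∑ l : Fin k, (l.1 + 1) * α l = 0 :=
        Finset.sum_eq_zero fun l hl => by rw [h0 l hl, Nat.mul_zero]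
      omega
    set F := ∏ l, ((α l).factorial : ℚ) with hFdef
    have hF : F ≠ 0 := fact_ne_zero α
    simp only [hg]
    rw [← Finset.sum_mul, ← map_sum]
    congr 2
    have hfull : (∑ p ∈ Finset.univ.filter fun p : Fin k => 0 < α p,
          ((n:ℚ) + (q-1)*((p.1:ℚ)+1))/(n:ℚ) * (B q (s - 1) * (α p : ℚ) / F))
        = ∑ p : Fin k, ((n:ℚ) + (q-1)*((p.1:ℚ)+1))/(n:ℚ) * (B q (s - 1) * (α p : ℚ) / F) :=
      Finset.sum_filter_of_ne fun p _ hne => by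
        by_contra h0
        apply hne
        rw [show α p = 0 from by omega]
        simp
    rw [hfull]
    have hwc : (∑ l, ((l.1:ℚ)+1) * (α l:ℚ)) = (n:ℚ) := by exact_mod_cast hαs
    have hsc : (∑ l, (α l : ℚ)) = (s:ℚ) := by rw [hs, Nat.cast_sum]
    have hsum2 : (∑ p : Fin k, ((n:ℚ) + (q-1)*((p.1:ℚ)+1)) * (α p:ℚ))
        = (n:ℚ) * s + (q-1) * n := by
      have hterm : ∀ p : Fin k, ((n:ℚ) + (q-1)*((p.1:ℚ)+1)) * (α p:ℚ)
          = (n:ℚ) * (α p:ℚ) + (q-1) * (((p.1:ℚ)+1) * (α p:ℚ)) := fun p => by ring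
      rw [Finset.sum_congr rfl fun p _ => hterm p, Finset.sum_add_distrib,
        ← Finset.mul_sum, ← Finset.mul_sum, hwc, hsc]
    have hBs : B q s = B q (s-1) * (q + ((s:ℚ) - 1)) := by
      have h1 : s = (s-1)+1 := by omega
      have h2 : ((s - 1 : ℕ) : ℚ) = (s:ℚ) - 1 := by
        push_cast [Nat.cast_sub hs1]
        ring
      conv_lhs => rw [h1]
      rw [B_succ, h2]
    calc (∑ p : Fin k, ((n:ℚ) + (q-1)*((p.1:ℚ)+1))/(n:ℚ) * (B q (s - 1) * (α p : ℚ) / F))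
        = (B q (s-1) / ((n:ℚ) * F)) * ∑ p : Fin k, ((n:ℚ) + (q-1)*((p.1:ℚ)+1)) * (α p:ℚ) := by
          rw [Finset.mul_sum]
          refine Finset.sum_congr rfl fun p _ => ?_
          field_simp
      _ = B q s / F := by
          rw [hsum2, hBs]
          field_simp
          ring
  rw [step1, step2, step3, step4]

noncomputable def aS (k : ℕ) (q : ℚ) (i j : ℕ) : MvPolynomial (Fin k) ℚ :=
  if j = 0 then C q * tQ k i
  else C ((((i - j + 1 : ℕ) : ℚ) * (B q (j + 1) / B q j)
      - (j : ℚ) * ((i - j : ℕ) : ℚ)) / ((i : ℚ) + 1)) * tQ k (i - j)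

lemma Smat_eq_hess (k n : ℕ) (q : ℚ) : Smat k n q = hess (aS k q) n := by
  funext i j
  simp only [Smat, hess, aS]
  split_ifs <;> first | rfl | omega

lemma aS_eq_aC (k : ℕ) (q : ℚ) (i j : ℕ) (hji : j ≤ i)
    (hB : ∀ m : ℕ, m < j → q + (m : ℚ) ≠ 0) :
    aS k q i j = aC k q i j := by
  rcases Nat.eq_zero_or_pos j with rfl | hj
  · rw [aS, if_pos rfl, aC, Nat.sub_zero]
    have hi0 : ((i + 1 : ℕ) : ℚ) ≠ 0 := by positivity
    have hq0 : q = (((i+1:ℕ):ℚ) + (q-1)*((i+1:ℕ):ℚ))/((i+1:ℕ):ℚ) := by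
      rw [eq_div_iff hi0]
      ring
    rw [← hq0]
  · obtain ⟨d, rfl⟩ : ∃ d, i = j + d := ⟨i - j, by omega⟩
    rw [aS, if_neg (by omega), aC]
    have hd : j + d - j = d := by omega
    rw [hd]
    have hBj : B q j ≠ 0 := by
      rw [B]
      exact Finset.prod_ne_zero_iff.2 fun m hm => hB m (Finset.mem_range.1 hm)
    rw [B_succ]
    congr 1
    rw [mul_div_cancel_left₀ _ hBj]
    have hden : ((j : ℚ) + (d : ℚ) + 1) ≠ 0 := by positivity
    congr 1
    push_cast
    rw [div_eq_div_iff hden hden]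
    ring

lemma hess_aS_eq (k n : ℕ) (q : ℚ)
    (hq : ∀ m : ℕ, (m : ℤ) ≤ (n : ℤ) - 2 → q + (m : ℚ) ≠ 0) :
    hess (aS k q) n = hess (aC k q) n := by
  refine Matrix.ext fun i j => ?_
  simp only [hess]
  by_cases h : j.1 ≤ i.1
  · rw [if_pos h, if_pos h]
    refine aS_eq_aC k q i.1 j.1 h fun m hm => hq m ?_
    have := i.isLt
    omega
  · rw [if_neg h, if_neg h]

lemma det_hess_aC (k : ℕ) (hk : 1 ≤ k) (q : ℚ) :
    ∀ m : ℕ, (hess (aC k q) m).det = Fq k q m := by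
  intro m
  induction m using Nat.strong_induction_on with
  | _ m ih =>
    match m with
    | 0 => simp [Fq]
    | Nat.succ m' =>
      rw [det_hess_succ]
      rw [Finset.sum_congr rfl fun (j : Fin (m'+1)) _ => by
        rw [ih j.1 (by exact j.isLt)]]
      exact Fq_rec k hk q (m'+1) (by omega)

theorem det_Smat_eq_Fq (k n : ℕ) (hk : 1 ≤ k) (hn : 1 ≤ n) (q : ℚ)
    (hq : ∀ m : ℕ, (m : ℤ) ≤ (n : ℤ) - 2 → q + (m : ℚ) ≠ 0) :
    (Smat k n q).det = Fq k q n := by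
  rw [Smat_eq_hess, hess_aS_eq k n q hq, det_hess_aC k hk q n]
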